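/- Let W and Z be CW complexes, W′ a finite subcomplex of W, Z′ a finite subcomplex of Z, U open in W′, V open in Z′, and H a sequentially closed subset of W × Z (product topology) such that the closure of U × V is disjoint from H. Let e be a cell of Z whose boundary is contained in Z′. Then there exists p ∈ ℕ such that the closure of U × (V ∪ C^e_p(V)) is disjoint from H. -/

import Mathlib

open Set Metric Topology

/-- Eventual domination of functions `ℕ → ℕ`. -/
def EvDom (f g : ℕ → ℕ) : Prop := ∀ᶠ n in Filter.atTop, f n ≤ g n

/-- The bounding number `𝔟`: the least cardinality of a family of functions `ℕ → ℕ`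
unbounded with respect to eventual domination. -/
noncomputable def boundingNumber : Cardinal :=
  sInf {c : Cardinal | ∃ F : Set (ℕ → ℕ), Cardinal.mk F = c ∧
    ∀ g : ℕ → ℕ, ∃ f ∈ F, ¬ EvDom f g}

/-- A cell decomposition of a Hausdorff space: characteristic maps from closed discs,
restricting to homeomorphisms onto their images on the open discs, with the open cells
partitioning the space, satisfying closure-finiteness. -/
structure CellStruct (X : Type) [TopologicalSpace X] where
  ι : Type
  dim : ι → ℕ
  map : (i : ι) → EuclideanSpace ℝ (Fin (dim i)) → X
  continuousOn : ∀ i, ContinuousOn (map i) (closedBall 0 1)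
  isEmbedding : ∀ i, IsEmbedding ((ball (0 : EuclideanSpace ℝ (Fin (dim i))) 1).restrict (map i))
  pairwiseDisjoint :
    Pairwise fun i j => Disjoint (map i '' ball 0 1) (map j '' ball 0 1)
  iUnion_eq : ⋃ i, map i '' ball 0 1 = univ
  closureFinite : ∀ i, ∃ F : Finset ι, (∀ j ∈ F, dim j < dim i) ∧
    map i '' sphere 0 1 ⊆ ⋃ j ∈ F, map j '' ball 0 1

namespace CellStruct

variable {X : Type} [TopologicalSpace X]

/-- The open cell with index `i`. -/
def openCell (C : CellStruct X) (i : C.ι) : Set X := C.map i '' ball 0 1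

/-- The closed cell with index `i`. -/
def closedCell (C : CellStruct X) (i : C.ι) : Set X := C.map i '' closedBall 0 1

/-- The image of the boundary sphere of the cell with index `i`. -/
def sphereImage (C : CellStruct X) (i : C.ι) : Set X := C.map i '' sphere 0 1

/-- The cell structure has the weak topology: a set is closed iff its intersection with
every closed cell is closed. -/
def HasWeakTopology (C : CellStruct X) : Prop :=
  ∀ A : Set X, IsClosed A ↔ ∀ i, IsClosed (A ∩ C.closedCell i)

end CellStruct

/-- A CW structure on a (Hausdorff) space: a cell decomposition with closure-finiteness,
such that the topology is the weak topology determined by the closed cells. -/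
structure CWStruct (X : Type) [TopologicalSpace X] extends CellStruct X where
  weakTopology : toCellStruct.HasWeakTopology

namespace CWStruct

variable {X : Type} [TopologicalSpace X]

/-- A subcomplex: a union of open cells containing the closure of each of its cells. -/
def IsSubcomplex (C : CWStruct X) (A : Set X) : Prop :=
  (∃ J : Set C.ι, A = ⋃ j ∈ J, C.openCell j) ∧
    ∀ i, C.openCell i ⊆ A → C.closedCell i ⊆ A

/-- The set of (indices of) cells of a subcomplex `A`. -/
def cells (C : CWStruct X) (A : Set X) : Set C.ι := {i | C.openCell i ⊆ A}

/-- `X` is locally less than `κ`: every point is in the interior of a subcomplex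
with fewer than `κ` many cells. -/
def LocallyLT (C : CWStruct X) (κ : Cardinal) : Prop :=
  ∀ x : X, ∃ A : Set X, C.IsSubcomplex A ∧ Cardinal.mk (C.cells A) < κ ∧ x ∈ interior A

/-- Locally finite: every point is in the interior of a finite subcomplex. -/
def LocallyFinite (C : CWStruct X) : Prop := C.LocallyLT Cardinal.aleph0

/-- Locally countable: every point is in the interior of a countable subcomplex. -/
def LocallyCountable (C : CWStruct X) : Prop := C.LocallyLT (Cardinal.aleph 1)

end CWStruct

/-- `E` is a CW structure on `X × Y` (with the product topology) whose cells are
exactly the products of cells of `C` and `D`, with the corresponding dimensions.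
The existence of such an `E` expresses that the product topology on `X × Y`
makes it a CW complex with the product cell structure. -/
def IsProductCWStruct {X Y : Type} [TopologicalSpace X] [TopologicalSpace Y]
    (C : CWStruct X) (D : CWStruct Y) (E : CWStruct (X × Y)) : Prop :=
  (∀ k : E.ι, ∃ (a : C.ι) (b : D.ι),
      E.openCell k = C.openCell a ×ˢ D.openCell b ∧ E.dim k = C.dim a + D.dim b) ∧
  (∀ (a : C.ι) (b : D.ι), ∃ k : E.ι, E.openCell k = C.openCell a ×ˢ D.openCell b)

/-- A space is compactly generated: a set is closed whenever its intersection with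
every compact subset is closed in the subspace topology. -/
def IsKSpace (X : Type) [TopologicalSpace X] : Prop :=
  ∀ A : Set X, (∀ K : Set X, IsCompact K → IsClosed ((Subtype.val ⁻¹' A : Set K))) → IsClosed A

namespace CWStruct

variable {X : Type} [TopologicalSpace X]

/-- The collar neighbourhood `C^e_n(U)` inside the closed cell `e`:
the image of `{t • z : t ∈ (n/(n+1), 1], z ∈ Sᵈ, φ_e z ∈ U}` under `φ_e`. -/
noncomputable def collar (C : CWStruct X) (e : C.ι) (n : ℕ) (U : Set X) : Set X :=
  C.map e '' {p | ∃ t ∈ Set.Ioc ((n : ℝ) / (n + 1)) 1,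
    ∃ z : EuclideanSpace ℝ (Fin (C.dim e)), ‖z‖ = 1 ∧ C.map e z ∈ U ∧ p = t • z}

/-- The basic neighbourhood `B_n(x)` of `x = φ_{i₀} z` inside its open cell: the image of
the open ball about `z` of radius `min (1/(n+1)) ((1 - ‖z‖)/2)`. -/
noncomputable def ballNbhd (C : CWStruct X) (i₀ : C.ι)
    (z : EuclideanSpace ℝ (Fin (C.dim i₀))) (n : ℕ) : Set X :=
  C.map i₀ '' Metric.ball z (min (1 / (n + 1)) ((1 - ‖z‖) / 2))

open Classical in
/-- The part of the neighbourhood `U_f(x)` lying in the `n`-skeleton, defined by recursion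
on dimension: start with `B_{f i₀}(x)` in dimension `dim i₀` (with the empty set in every
other cell of dimension at most `dim i₀`), and extend through each cell of each higher
dimension by the collar neighbourhoods `C^e_{f e}(·)`. -/
noncomputable def nbhdSkel (C : CWStruct X) (i₀ : C.ι)
    (z : EuclideanSpace ℝ (Fin (C.dim i₀))) (f : C.ι → ℕ) : ℕ → Set X
  | 0 => if C.dim i₀ = 0 then C.ballNbhd i₀ z (f i₀) else ∅
  | n + 1 =>
      (if C.dim i₀ = n + 1 then C.ballNbhd i₀ z (f i₀) else ∅) ∪
      C.nbhdSkel i₀ z f n ∪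
      ⋃ e : C.ι, if C.dim e = n + 1 then C.collar e (f e) (C.nbhdSkel i₀ z f n) else ∅

/-- The open neighbourhood `U_f(x)` of `x = φ_{i₀} z` determined by `f : ι → ℕ`. -/
noncomputable def nbhd (C : CWStruct X) (i₀ : C.ι)
    (z : EuclideanSpace ℝ (Fin (C.dim i₀))) (f : C.ι → ℕ) : Set X :=
  ⋃ n, C.nbhdSkel i₀ z f n

end CWStruct



section Helpers
open Filter
variable {X : Type} [TopologicalSpace X]

lemma CellStruct.isCompact_closedCell (C : CellStruct X) (i : C.ι) :
    IsCompact (C.closedCell i) :=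
  (isCompact_closedBall 0 1).image_of_continuousOn (C.continuousOn i)

lemma CellStruct.openCell_subset_closedCell (C : CellStruct X) (i : C.ι) :
    C.openCell i ⊆ C.closedCell i :=
  Set.image_mono ball_subset_closedBall

lemma CWStruct.subcomplex_eq_biUnion (C : CWStruct X) {A : Set X}
    (h : C.IsSubcomplex A) : A = ⋃ i ∈ C.cells A, C.closedCell i := by
  obtain ⟨⟨J, hJ⟩, hcl⟩ := h
  apply subset_antisymm
  · intro x hx
    rw [hJ] at hx
    obtain ⟨j, hjJ, hxj⟩ := mem_iUnion₂.mp hx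
    have hsub : C.openCell j ⊆ A := by
      rw [hJ]; exact subset_iUnion₂ (s := fun i _ => C.openCell i) j hjJ
    exact mem_iUnion₂.mpr ⟨j, hsub, C.toCellStruct.openCell_subset_closedCell j hxj⟩
  · exact iUnion₂_subset fun i hi => hcl i hi

lemma CWStruct.isCompact_of_finite_subcomplex (C : CWStruct X) {A : Set X}
    (h : C.IsSubcomplex A) (hfin : (C.cells A).Finite) : IsCompact A := by
  rw [C.subcomplex_eq_biUnion h]
  exact hfin.isCompact_biUnion fun i _ => C.toCellStruct.isCompact_closedCell i

lemma tendsto_comp_of_continuousOn' {E : Type*} [TopologicalSpace E]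
    {f : E → X} {s : Set E} (hf : ContinuousOn f s) {u : ℕ → E} {x : E}
    (hu : ∀ n, u n ∈ s) (hx : x ∈ s) (h : Tendsto u atTop (𝓝 x)) :
    Tendsto (fun n => f (u n)) atTop (𝓝 (f x)) :=
  (hf x hx).tendsto.comp (tendsto_nhdsWithin_iff.mpr ⟨h, Eventually.of_forall hu⟩)

lemma frac_mono' {m p : ℕ} (h : m ≤ p) : (m : ℝ) / (m + 1) ≤ (p : ℝ) / (p + 1) := by
  rw [div_le_div_iff₀ (by positivity) (by positivity)]
  have : (m : ℝ) ≤ p := Nat.cast_le.mpr h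
  nlinarith

lemma frac_lim {c : ℝ} (h1 : c ≤ 1) (h2 : ∀ m : ℕ, (m : ℝ) / (m + 1) ≤ c) : c = 1 := by
  have ht : Tendsto (fun m : ℕ => (m : ℝ) / (m + 1)) atTop (𝓝 1) :=
    tendsto_natCast_div_add_atTop 1
  exact le_antisymm h1 (le_of_tendsto ht (Eventually.of_forall h2))

end Helpers

/-- The cell-extension lemma: given finite subcomplexes `W' ⊆ W`, `Z' ⊆ Z`, relatively open
sets `U ⊆ W'`, `V ⊆ Z'`, a sequentially closed `H ⊆ W × Z` with `closure (U ×ˢ V)` disjoint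
from `H`, and a cell `e` of `Z` with boundary in `Z'`, there is `p` with
`closure (U ×ˢ (V ∪ C^e_p(V)))` disjoint from `H`. -/
theorem collar_extension {W Z : Type} [TopologicalSpace W] [TopologicalSpace Z]
    [T2Space W] [T2Space Z] (CW : CWStruct W) (CZ : CWStruct Z)
    (W' Z' : Set W) (hW'sub : CW.IsSubcomplex W') (hW'fin : (CW.cells W').Finite)
    (Z'' : Set Z) (hZ'sub : CZ.IsSubcomplex Z'') (hZ'fin : (CZ.cells Z'').Finite)
    (U : Set W) (hU : ∃ O : Set W, IsOpen O ∧ U = O ∩ W')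
    (V : Set Z) (hV : ∃ O : Set Z, IsOpen O ∧ V = O ∩ Z'')
    (H : Set (W × Z)) (hH : IsSeqClosed H)
    (hdisj : Disjoint (closure (U ×ˢ V)) H)
    (e : CZ.ι) (he : CZ.sphereImage e ⊆ Z'') :
    ∃ p : ℕ, Disjoint (closure (U ×ˢ (V ∪ CZ.collar e p V))) H := by
  classical
  by_contra hcon
  push_neg at hcon
  have hne : ∀ p : ℕ, ∃ x, x ∈ closure (U ×ˢ (V ∪ CZ.collar e p V)) ∧ x ∈ H := fun p =>
    Set.not_disjoint_iff.mp (hcon p)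
  choose h hmemc hmemH using hne
  -- basic facts about the subcomplexes
  obtain ⟨OU, hOUopen, hUeq⟩ := hU
  obtain ⟨OV, hOVopen, hVeq⟩ := hV
  have hW'comp : IsCompact W' := CW.isCompact_of_finite_subcomplex hW'sub hW'fin
  have hZ'comp : IsCompact Z'' := CZ.isCompact_of_finite_subcomplex hZ'sub hZ'fin
  have hUW' : U ⊆ W' := by rw [hUeq]; exact inter_subset_right
  have hVZ' : V ⊆ Z'' := by rw [hVeq]; exact inter_subset_right
  have hclU : closure U ⊆ W' := closure_minimal hUW' hW'comp.isClosed
  have hclV : closure V ⊆ Z'' := closure_minimal hVZ' hZ'comp.isClosed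
  -- the compact sets Aₘ and Dₘ
  set E := EuclideanSpace ℝ (Fin (CZ.dim e)) with hE
  set S : Set E := {z | ‖z‖ = 1 ∧ CZ.map e z ∈ V} with hSdef
  set K : Set E := closure S with hK
  have hSsphere : S ⊆ sphere 0 1 := fun z hz => mem_sphere_zero_iff_norm.mpr hz.1
  have hKsphere : K ⊆ sphere 0 1 := closure_minimal hSsphere isClosed_sphere
  have hKcomp : IsCompact K :=
    (isCompact_sphere 0 1).of_isClosed_subset isClosed_closure hKsphere
  set A : ℕ → Set E := fun m =>
    (fun q : ℝ × E => q.1 • q.2) '' (Icc ((m : ℝ) / (m + 1)) 1 ×ˢ K) with hA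
  have hAcomp : ∀ m, IsCompact (A m) := fun m =>
    (isCompact_Icc.prod hKcomp).image continuous_smul
  have hAball : ∀ m, A m ⊆ closedBall 0 1 := by
    rintro m q ⟨⟨t, z⟩, ⟨ht, hz⟩, rfl⟩
    have hz1 : ‖z‖ = 1 := mem_sphere_zero_iff_norm.mp (hKsphere hz)
    have ht0 : (0 : ℝ) ≤ t := le_trans (by positivity) ht.1
    simp only [mem_closedBall_zero_iff]
    rw [norm_smul, hz1, mul_one, Real.norm_eq_abs, abs_of_nonneg ht0]
    exact ht.2
  have hAanti : ∀ {m p : ℕ}, m ≤ p → A p ⊆ A m := by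
    intro m p hmp
    exact image_mono (prod_mono_left (Icc_subset_Icc_left (frac_mono' hmp)))
  set D : ℕ → Set Z := fun m => CZ.map e '' A m with hD
  have hDcomp : ∀ m, IsCompact (D m) := fun m =>
    (hAcomp m).image_of_continuousOn ((CZ.continuousOn e).mono (hAball m))
  have hCsubA : ∀ p m : ℕ, m ≤ p →
      {q : E | ∃ t ∈ Set.Ioc ((p : ℝ) / (p + 1)) 1,
        ∃ z : E, ‖z‖ = 1 ∧ CZ.map e z ∈ V ∧ q = t • z} ⊆ A m := by
    rintro p m hmp q ⟨t, ht, z, hz1, hzV, rfl⟩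
    exact ⟨(t, z), ⟨⟨le_trans (frac_mono' hmp) (le_of_lt ht.1), ht.2⟩,
      subset_closure ⟨hz1, hzV⟩⟩, rfl⟩
  have hCsubD : ∀ p m : ℕ, m ≤ p → CZ.collar e p V ⊆ D m := fun p m hmp =>
    image_mono (hCsubA p m hmp)
  have hCcell : ∀ p : ℕ, CZ.collar e p V ⊆ CZ.closedCell e := fun p =>
    (hCsubD p 0 (Nat.zero_le p)).trans (image_mono (hAball 0))
  -- coordinates of the points h p
  have hcmem : ∀ p, h p ∈ closure U ×ˢ (closure V ∪ closure (CZ.collar e p V)) := by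
    intro p
    have := hmemc p
    rw [closure_prod_eq, closure_union] at this
    exact this
  have hc1 : ∀ p, (h p).1 ∈ closure U := fun p => (hcmem p).1
  have hc2 : ∀ p, (h p).2 ∈ closure V ∪ closure (CZ.collar e p V) := fun p => (hcmem p).2
  -- pigeonhole over finitely many cells
  haveI : Finite ↥(CW.cells W') := hW'fin.to_subtype
  haveI : Finite ↥(insert e (CZ.cells Z'')) := (hZ'fin.insert e).to_subtype
  have hFi : ∀ p, ∃ i ∈ CW.cells W', (h p).1 ∈ CW.closedCell i := by
    intro p
    have : (h p).1 ∈ W' := hclU (hc1 p)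
    rw [CW.subcomplex_eq_biUnion hW'sub] at this
    obtain ⟨i, hi, hmi⟩ := mem_iUnion₂.mp this
    exact ⟨i, hi, hmi⟩
  have hFj : ∀ p, ∃ j ∈ insert e (CZ.cells Z''), (h p).2 ∈ CZ.closedCell j := by
    intro p
    rcases hc2 p with hv | hcC
    · have : (h p).2 ∈ Z'' := hclV hv
      rw [CZ.subcomplex_eq_biUnion hZ'sub] at this
      obtain ⟨j, hj, hmem⟩ := mem_iUnion₂.mp this
      exact ⟨j, mem_insert_of_mem e hj, hmem⟩
    · refine ⟨e, mem_insert e _, ?_⟩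
      exact closure_minimal (hCcell p) (CZ.toCellStruct.isCompact_closedCell e).isClosed hcC
  choose Fi hFi1 hFi2 using hFi
  choose Fj hFj1 hFj2 using hFj
  set F : ℕ → ↥(CW.cells W') × ↥(insert e (CZ.cells Z'')) :=
    fun p => (⟨Fi p, hFi1 p⟩, ⟨Fj p, hFj1 p⟩) with hF
  obtain ⟨⟨i, j⟩, hfib⟩ := Finite.exists_infinite_fiber F
  have hSinf : (F ⁻¹' {(i, j)}).Infinite := Set.infinite_coe_iff.mp hfib
  have hemb := hSinf.natEmbedding
  set g0 : ℕ → ℕ := fun n => (hemb n : ℕ) with hg0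
  have hg0inj : Function.Injective g0 := fun a b hab =>
    hemb.injective (Subtype.ext hab)
  have hg0mem : ∀ n, F (g0 n) = (i, j) := fun n => (hemb n).2
  have hgi : ∀ n, Fi (g0 n) = (i : CW.ι) := fun n =>
    congrArg (fun q => (q.1 : CW.ι)) (hg0mem n)
  have hgj : ∀ n, Fj (g0 n) = (j : CZ.ι) := fun n =>
    congrArg (fun q => (q.2 : CZ.ι)) (hg0mem n)
  have hmem1 : ∀ n, (h (g0 n)).1 ∈ CW.closedCell (i : CW.ι) := fun n => hgi n ▸ hFi2 (g0 n)
  have hmem2 : ∀ n, (h (g0 n)).2 ∈ CZ.closedCell (j : CZ.ι) := fun n => hgj n ▸ hFj2 (g0 n)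
  -- choose preimages in the closed balls and extract convergent subsequences
  have hex1 : ∀ n, ∃ a ∈ closedBall (0 : EuclideanSpace ℝ (Fin (CW.dim i))) 1,
      CW.map i a = (h (g0 n)).1 := fun n => hmem1 n
  have hex2 : ∀ n, ∃ b ∈ closedBall (0 : EuclideanSpace ℝ (Fin (CZ.dim j))) 1,
      CZ.map j b = (h (g0 n)).2 := fun n => hmem2 n
  choose a ha1 ha2 using hex1
  choose b hb1 hb2 using hex2
  obtain ⟨α, hα, ψ1, hψ1, hconva⟩ := (isCompact_closedBall
    (0 : EuclideanSpace ℝ (Fin (CW.dim i))) 1).tendsto_subseq ha1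
  obtain ⟨β, hβ, ψ2, hψ2, hconvb⟩ := (isCompact_closedBall
    (0 : EuclideanSpace ℝ (Fin (CZ.dim j))) 1).tendsto_subseq (fun n => hb1 (ψ1 n))
  set g : ℕ → ℕ := fun n => g0 (ψ1 (ψ2 n)) with hg
  have hconva2 : Filter.Tendsto (fun n => a (ψ1 (ψ2 n))) Filter.atTop (𝓝 α) :=
    hconva.comp hψ2.tendsto_atTop
  have hconvb2 : Filter.Tendsto (fun n => b (ψ1 (ψ2 n))) Filter.atTop (𝓝 β) := hconvb
  set x : W × Z := (CW.map i α, CZ.map j β) with hx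
  have hT1 : Filter.Tendsto (fun n => (h (g n)).1) Filter.atTop (𝓝 x.1) := by
    have := tendsto_comp_of_continuousOn' (CW.continuousOn i)
      (fun n => ha1 (ψ1 (ψ2 n))) hα hconva2
    exact this.congr fun n => ha2 (ψ1 (ψ2 n))
  have hT2 : Filter.Tendsto (fun n => (h (g n)).2) Filter.atTop (𝓝 x.2) := by
    have := tendsto_comp_of_continuousOn' (CZ.continuousOn j)
      (fun n => hb1 (ψ1 (ψ2 n))) hβ hconvb2
    exact this.congr fun n => hb2 (ψ1 (ψ2 n))
  have hT : Filter.Tendsto (fun n => h (g n)) Filter.atTop (𝓝 x) := hT1.prodMk_nhds hT2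
  have hxH : x ∈ H := hH (fun n => hmemH (g n)) hT
  have hgtop : Filter.Tendsto g Filter.atTop Filter.atTop := by
    have h0 : Filter.Tendsto g0 Filter.atTop Filter.atTop := by
      have := hg0inj.tendsto_cofinite
      rwa [Nat.cofinite_eq_atTop] at this
    exact h0.comp ((hψ1.tendsto_atTop).comp hψ2.tendsto_atTop)
  -- the limit lies in closure U ×ˢ closure V
  have hx1 : x.1 ∈ closure U :=
    isClosed_closure.mem_of_tendsto hT1 (Filter.Eventually.of_forall fun n => hc1 (g n))
  have hxDm : ∀ m : ℕ, x.2 ∈ closure V ∪ D m := by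
    intro m
    refine (isClosed_closure.union (hDcomp m).isClosed).mem_of_tendsto hT2 ?_
    filter_upwards [hgtop.eventually_ge_atTop m] with n hn
    rcases hc2 (g n) with hv | hC
    · exact Or.inl hv
    · exact Or.inr (closure_minimal (hCsubD (g n) m hn) (hDcomp m).isClosed hC)
  have hx2 : x.2 ∈ closure V := by
    by_cases hxV : x.2 ∈ closure V
    · exact hxV
    · have hxD : ∀ m, x.2 ∈ D m := fun m => (hxDm m).resolve_left hxV
      set B : ℕ → Set E := fun m =>
        A m ∩ (closedBall 0 1 ∩ CZ.map e ⁻¹' {x.2}) with hB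
      have hQcl : IsClosed (closedBall (0 : E) 1 ∩ CZ.map e ⁻¹' {x.2}) :=
        (CZ.continuousOn e).preimage_isClosed_of_isClosed
          Metric.isClosed_closedBall isClosed_singleton
      have hBcl : ∀ m, IsClosed (B m) := fun m => (hAcomp m).isClosed.inter hQcl
      have hBne : ∀ m, (B m).Nonempty := by
        intro m
        obtain ⟨q, hqA, hqe⟩ := hxD m
        exact ⟨q, hqA, hAball m hqA, hqe⟩
      have hBanti : ∀ m, B (m + 1) ⊆ B m := fun m =>
        inter_subset_inter_left _ (hAanti (Nat.le_succ m))
      have hB0 : IsCompact (B 0) :=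
        (hAcomp 0).of_isClosed_subset (hBcl 0) inter_subset_left
      obtain ⟨q, hq⟩ := IsCompact.nonempty_iInter_of_sequence_nonempty_isCompact_isClosed
        B hBanti hBne hB0 hBcl
      have hqA : ∀ m, q ∈ A m := fun m => (mem_iInter.mp hq m).1
      have hqball : q ∈ closedBall (0 : E) 1 := (mem_iInter.mp hq 0).2.1
      have hqe : CZ.map e q = x.2 := (mem_iInter.mp hq 0).2.2
      have hnorm : ∀ m : ℕ, (m : ℝ) / (m + 1) ≤ ‖q‖ := by
        intro m
        obtain ⟨⟨t, z⟩, ⟨ht, hz⟩, hqt⟩ := hqA m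
        have hz1 : ‖z‖ = 1 := mem_sphere_zero_iff_norm.mp (hKsphere hz)
        have ht0 : (0 : ℝ) ≤ t := le_trans (by positivity) ht.1
        have hnq : ‖q‖ = t := by
          rw [← hqt]
          simp only
          rw [norm_smul, hz1, mul_one, Real.norm_eq_abs, abs_of_nonneg ht0]
        rw [hnq]; exact ht.1
      have hq1 : ‖q‖ = 1 := frac_lim (mem_closedBall_zero_iff.mp hqball) hnorm
      have hqK : q ∈ K := by
        obtain ⟨⟨t, z⟩, ⟨ht, hz⟩, hqt⟩ := hqA 0
        have hz1 : ‖z‖ = 1 := mem_sphere_zero_iff_norm.mp (hKsphere hz)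
        have ht0 : (0 : ℝ) ≤ t := le_trans (by positivity) ht.1
        have hnq : ‖q‖ = t := by
          rw [← hqt]
          simp only
          rw [norm_smul, hz1, mul_one, Real.norm_eq_abs, abs_of_nonneg ht0]
        have ht1 : t = 1 := by rw [← hnq, hq1]
        have : q = z := by rw [← hqt]; simp only; rw [ht1, one_smul]
        rw [this]; exact hz
      have himg : CZ.map e q ∈ closure (CZ.map e '' S) := by
        have hcont : ContinuousOn (CZ.map e) (closure S) :=
          (CZ.continuousOn e).mono (hKsphere.trans sphere_subset_closedBall)
        exact hcont.image_closure ⟨q, hqK, rfl⟩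
      have hfin : CZ.map e q ∈ closure V := by
        refine closure_mono ?_ himg
        rintro y ⟨z, hzS, rfl⟩
        exact hzS.2
      rw [hqe] at hfin
      exact absurd hfin hxV
  have hxUV : x ∈ closure (U ×ˢ V) := by
    rw [closure_prod_eq]
    exact ⟨hx1, hx2⟩
  exact (Set.disjoint_left.mp hdisj hxUV) hxH
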